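/- Let Γ, ω₀, χ₀ > 0 with Γ² − 4ω₀² < 0. There exist ε₀ > 0 and constants C₀, C₁ > 0 such that for all 0 < ε < ε₀ and all p > C₀ ε, the quartic polynomial Q(s; p, ε) = (s² + εΓs + ε²ω₀²)(p² + s²) + ε²χ₀ s² has a pair of roots of the form s⁰_± = −(ε/2)(Γ ± √(Γ² − 4ω₀²)) + ε σ⁰_±(p), where the correction terms satisfy |σ⁰_±(p)| ≤ C₁ ε² / p². (Since Γ² − 4ω₀² < 0, the square root √(Γ² − 4ω₀²) is purely imaginary and the two roots are complex conjugates.) -/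

import Mathlib

noncomputable section

/-- The quartic polynomial `Q(s; p, ε) = (s² + εΓs + ε²ω₀²)(p² + s²) + ε²χ₀ s²`. -/
def Qf (Γ ω₀ χ₀ ε p : ℝ) (s : ℂ) : ℂ :=
  (s ^ 2 + (ε : ℂ) * (Γ : ℂ) * s + (ε : ℂ) ^ 2 * (ω₀ : ℂ) ^ 2) * ((p : ℂ) ^ 2 + s ^ 2)
    + (ε : ℂ) ^ 2 * (χ₀ : ℂ) * s ^ 2

set_option maxHeartbeats 1000000 in
/-- Lemma (the damped pair of roots): for `0 < ε < ε₀` and `p > C₀ ε`, the quartic `Q`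
has a pair of complex-conjugate roots
`s⁰_± = −(ε/2)(Γ ± i√(4ω₀² − Γ²)) + ε σ⁰_±(p)` with `|σ⁰_±(p)| ≤ C₁ ε²/p²`.
(Here `√(Γ² − 4ω₀²) = i√(4ω₀² − Γ²)` is purely imaginary since `Γ² − 4ω₀² < 0`.) -/
theorem statement3 (Γ ω₀ χ₀ : ℝ) (hΓ : 0 < Γ) (hω₀ : 0 < ω₀) (hχ₀ : 0 < χ₀)
    (hdisc : Γ ^ 2 - 4 * ω₀ ^ 2 < 0) :
    ∃ ε₀ > (0 : ℝ), ∃ C₀ > (0 : ℝ), ∃ C₁ > (0 : ℝ),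
      ∀ ε : ℝ, 0 < ε → ε < ε₀ → ∀ p : ℝ, C₀ * ε < p →
        ∃ σp σm : ℂ,
          Qf Γ ω₀ χ₀ ε p
              (-((ε / 2 : ℝ) : ℂ) * ((Γ : ℂ) + Complex.I * (Real.sqrt (4 * ω₀ ^ 2 - Γ ^ 2) : ℂ))
                + (ε : ℂ) * σp) = 0 ∧
          Qf Γ ω₀ χ₀ ε p
              (-((ε / 2 : ℝ) : ℂ) * ((Γ : ℂ) - Complex.I * (Real.sqrt (4 * ω₀ ^ 2 - Γ ^ 2) : ℂ))
                + (ε : ℂ) * σm) = 0 ∧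
          ‖σp‖ ≤ C₁ * ε ^ 2 / p ^ 2 ∧ ‖σm‖ ≤ C₁ * ε ^ 2 / p ^ 2 ∧
          -- the two roots are complex conjugates of one another
          (-((ε / 2 : ℝ) : ℂ) * ((Γ : ℂ) - Complex.I * (Real.sqrt (4 * ω₀ ^ 2 - Γ ^ 2) : ℂ))
                + (ε : ℂ) * σm)
            = starRingEnd ℂ
              (-((ε / 2 : ℝ) : ℂ) * ((Γ : ℂ) + Complex.I * (Real.sqrt (4 * ω₀ ^ 2 - Γ ^ 2) : ℂ))
                + (ε : ℂ) * σp) := by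
  have hD : (0 : ℝ) < 4 * ω₀ ^ 2 - Γ ^ 2 := by linarith
  obtain ⟨Δ, hΔdef⟩ : ∃ x : ℝ, x = Real.sqrt (4 * ω₀ ^ 2 - Γ ^ 2) := ⟨_, rfl⟩
  have hΔpos : 0 < Δ := hΔdef ▸ Real.sqrt_pos.mpr hD
  have hΔsq : Δ ^ 2 = 4 * ω₀ ^ 2 - Γ ^ 2 := hΔdef ▸ Real.sq_sqrt hD.le
  rw [← hΔdef]
  obtain ⟨M, hMdef⟩ : ∃ x : ℝ, x = ω₀ + Δ := ⟨_, rfl⟩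
  have hM : 0 < M := by rw [hMdef]; positivity
  obtain ⟨C₁, hC₁def⟩ : ∃ x : ℝ, x = 4 * χ₀ * M ^ 2 / Δ := ⟨_, rfl⟩
  have hC₁ : 0 < C₁ := by rw [hC₁def]; positivity
  obtain ⟨K₀, hK₀def⟩ : ∃ x : ℝ, x = 2 * M ^ 2 + 3 * M * Δ := ⟨_, rfl⟩
  have hK₀ : 0 < K₀ := by rw [hK₀def]; positivity
  obtain ⟨C₀, hC₀def⟩ : ∃ x : ℝ, x = max (2 * M)
      (max (Real.sqrt (2 * C₁ / Δ)) (Real.sqrt (32 * χ₀ * K₀) / Δ)) + 1 := ⟨_, rfl⟩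
  have hC₀ : 0 < C₀ := by
    rw [hC₀def]
    have h1 : (0:ℝ) ≤ max (2 * M) (max (Real.sqrt (2 * C₁ / Δ)) (Real.sqrt (32 * χ₀ * K₀) / Δ)) :=
      le_trans (by positivity) (le_max_left _ _)
    linarith
  refine ⟨1, one_pos, C₀, hC₀, C₁, hC₁, ?_⟩
  intro ε hε _ p hp
  have hp0 : 0 < p := lt_trans (mul_pos hC₀ hε) hp
  -- basic numeric consequences of p > C₀ ε
  have hC₀2M : 2 * M ≤ C₀ := by
    rw [hC₀def]; linarith [le_max_left (2*M) (max (Real.sqrt (2 * C₁ / Δ)) (Real.sqrt (32 * χ₀ * K₀) / Δ))]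
  have hC₀s1 : Real.sqrt (2 * C₁ / Δ) ≤ C₀ := by
    rw [hC₀def]
    linarith [le_trans (le_max_left (Real.sqrt (2 * C₁ / Δ)) (Real.sqrt (32 * χ₀ * K₀) / Δ))
      (le_max_right (2*M) _)]
  have hC₀s2 : Real.sqrt (32 * χ₀ * K₀) / Δ ≤ C₀ := by
    rw [hC₀def]
    linarith [le_trans (le_max_right (Real.sqrt (2 * C₁ / Δ)) (Real.sqrt (32 * χ₀ * K₀) / Δ))
      (le_max_right (2*M) _)]
  have hεM : 2 * (ε * M) < p := by nlinarith
  have hεM2 : ε ^ 2 * M ^ 2 ≤ p ^ 2 / 4 := by nlinarith [mul_pos hε hM]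
  have hsq1 : 2 * C₁ / Δ ≤ C₀ ^ 2 := by
    calc 2 * C₁ / Δ = Real.sqrt (2 * C₁ / Δ) ^ 2 :=
          (Real.sq_sqrt (by positivity)).symm
      _ ≤ C₀ ^ 2 := pow_le_pow_left₀ (Real.sqrt_nonneg _) hC₀s1 2
  have hsq2 : 32 * χ₀ * K₀ ≤ Δ ^ 2 * C₀ ^ 2 := by
    have h2 : Real.sqrt (32 * χ₀ * K₀) ≤ Δ * C₀ := by
      have h3 := mul_le_mul_of_nonneg_left hC₀s2 hΔpos.le
      calc Real.sqrt (32 * χ₀ * K₀) = Δ * (Real.sqrt (32 * χ₀ * K₀) / Δ) := by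
            field_simp
        _ ≤ Δ * C₀ := h3
    calc 32 * χ₀ * K₀ = Real.sqrt (32 * χ₀ * K₀) ^ 2 :=
          (Real.sq_sqrt (by positivity)).symm
      _ ≤ (Δ * C₀) ^ 2 := pow_le_pow_left₀ (Real.sqrt_nonneg _) h2 2
      _ = Δ ^ 2 * C₀ ^ 2 := by ring
  have hpC : C₀ ^ 2 * ε ^ 2 < p ^ 2 := by nlinarith [mul_pos hC₀ hε]
  have he2 : (0:ℝ) ≤ ε ^ 2 := sq_nonneg ε
  have hball : C₁ * ε ^ 2 / p ^ 2 ≤ Δ / 2 := by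
    rw [div_le_div_iff₀ (by positivity) (by norm_num : (0:ℝ) < 2)]
    have a1 : 2 * C₁ ≤ C₀ ^ 2 * Δ := (div_le_iff₀ hΔpos).mp hsq1
    linarith [mul_le_mul_of_nonneg_right a1 he2, mul_lt_mul_of_pos_left hpC hΔpos]
  have hlipconst : 16 * χ₀ * K₀ * ε ^ 2 / (Δ ^ 2 * p ^ 2) ≤ 1 / 2 := by
    rw [div_le_div_iff₀ (by positivity) (by norm_num : (0:ℝ) < 2)]
    have hΔ2pos : (0:ℝ) < Δ ^ 2 := by positivity
    linarith [mul_le_mul_of_nonneg_right hsq2 he2, mul_lt_mul_of_pos_left hpC hΔ2pos]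
  -- complex setup
  obtain ⟨u, hudef⟩ : ∃ x : ℂ, x = Complex.I * (Δ : ℂ) := ⟨_, rfl⟩
  obtain ⟨z₀, hz₀def⟩ : ∃ x : ℂ, x = -((Γ : ℂ) + u) / 2 := ⟨_, rfl⟩
  have hu2 : u ^ 2 = (Γ : ℂ) ^ 2 - 4 * (ω₀ : ℂ) ^ 2 := by
    rw [hudef, mul_pow, Complex.I_sq]
    have h1 : ((Δ : ℝ) : ℂ) ^ 2 = ((Δ ^ 2 : ℝ) : ℂ) := by push_cast; ring
    rw [h1, hΔsq]; push_cast; ring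
  have hnu : ‖u‖ = Δ := by
    rw [hudef, norm_mul, Complex.norm_I, one_mul, Complex.norm_real,
      Real.norm_of_nonneg hΔpos.le]
  have hnz₀ : ‖z₀‖ ≤ ω₀ + Δ / 2 := by
    have hΓ2 : Γ ≤ 2 * ω₀ := by
      by_contra hcon
      push_neg at hcon
      have h2 := mul_self_lt_mul_self (by linarith only [hω₀] : (0:ℝ) ≤ 2 * ω₀) hcon
      nlinarith only [h2, hD]
    have h1 : ‖z₀‖ = ‖(Γ : ℂ) + u‖ / 2 := by
      rw [hz₀def, norm_div, norm_neg]
      norm_num [Complex.norm_ofNat]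
    have h2 : ‖(Γ : ℂ) + u‖ ≤ Γ + Δ := by
      calc ‖(Γ : ℂ) + u‖ ≤ ‖(Γ : ℂ)‖ + ‖u‖ := norm_add_le _ _
        _ = Γ + Δ := by rw [hnu, Complex.norm_real, Real.norm_of_nonneg hΓ.le]
    rw [h1]; linarith only [h2, hΓ2, hΔpos]
  -- the maps g, d, T
  obtain ⟨g, hg⟩ : ∃ g : ℂ → ℂ, ∀ σ, g σ = -(ε : ℂ) ^ 2 * (χ₀ : ℂ) * (z₀ + σ) ^ 2 :=
    ⟨_, fun _ => rfl⟩
  obtain ⟨d, hd⟩ : ∃ d : ℂ → ℂ, ∀ σ,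
      d σ = (σ - u) * ((p : ℂ) ^ 2 + (ε : ℂ) ^ 2 * (z₀ + σ) ^ 2) := ⟨_, fun _ => rfl⟩
  obtain ⟨T, hT⟩ : ∃ T : ℂ → ℂ, ∀ σ, T σ = g σ / d σ := ⟨_, fun _ => rfl⟩
  -- norms of real casts
  have hnε : ‖(ε : ℂ)‖ = ε := by rw [Complex.norm_real, Real.norm_of_nonneg hε.le]
  have hnχ : ‖(χ₀ : ℂ)‖ = χ₀ := by rw [Complex.norm_real, Real.norm_of_nonneg hχ₀.le]
  have hnp2 : ‖((p : ℂ)) ^ 2‖ = p ^ 2 := by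
    rw [norm_pow, Complex.norm_real, Real.norm_of_nonneg hp0.le]
  -- bounds valid on the ball ‖σ‖ ≤ Δ/2
  have hA : ∀ σ : ℂ, ‖σ‖ ≤ Δ / 2 → ‖z₀ + σ‖ ≤ M := by
    intro σ hσ
    calc ‖z₀ + σ‖ ≤ ‖z₀‖ + ‖σ‖ := norm_add_le _ _
      _ ≤ (ω₀ + Δ / 2) + Δ / 2 := by gcongr
      _ = M := by rw [hMdef]; ring
  have hden2 : ∀ σ : ℂ, ‖σ‖ ≤ Δ / 2 →
      p ^ 2 / 2 ≤ ‖(p : ℂ) ^ 2 + (ε : ℂ) ^ 2 * (z₀ + σ) ^ 2‖ := by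
    intro σ hσ
    have h1 : ‖(ε : ℂ) ^ 2 * (z₀ + σ) ^ 2‖ ≤ ε ^ 2 * M ^ 2 := by
      rw [norm_mul, norm_pow, norm_pow, hnε]
      have h3 : ‖z₀ + σ‖ ^ 2 ≤ M ^ 2 := pow_le_pow_left₀ (norm_nonneg _) (hA σ hσ) 2
      exact mul_le_mul_of_nonneg_left h3 (sq_nonneg ε)
    have h4 : p ^ 2 - ε ^ 2 * M ^ 2 ≤ ‖(p : ℂ) ^ 2 + (ε : ℂ) ^ 2 * (z₀ + σ) ^ 2‖ := by
      have h5 := norm_sub_norm_le ((p : ℂ) ^ 2) (-((ε : ℂ) ^ 2 * (z₀ + σ) ^ 2))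
      rw [norm_neg, hnp2, sub_neg_eq_add] at h5
      linarith only [h5, h1]
    linarith only [h4, hεM2, sq_nonneg p]
  have hden1 : ∀ σ : ℂ, ‖σ‖ ≤ Δ / 2 → Δ / 2 ≤ ‖σ - u‖ := by
    intro σ hσ
    have h1 := norm_sub_norm_le u σ
    rw [hnu, norm_sub_rev] at h1
    linarith only [h1, hσ]
  have hdenlb : ∀ σ : ℂ, ‖σ‖ ≤ Δ / 2 → Δ * p ^ 2 / 4 ≤ ‖d σ‖ := by
    intro σ hσ
    rw [hd, norm_mul]
    calc Δ * p ^ 2 / 4 = (Δ / 2) * (p ^ 2 / 2) := by ring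
      _ ≤ ‖σ - u‖ * ‖(p : ℂ) ^ 2 + (ε : ℂ) ^ 2 * (z₀ + σ) ^ 2‖ :=
          mul_le_mul (hden1 σ hσ) (hden2 σ hσ) (by positivity) (norm_nonneg _)
  have hdne : ∀ σ : ℂ, ‖σ‖ ≤ Δ / 2 → d σ ≠ 0 := by
    intro σ hσ h0
    have h1 := hdenlb σ hσ
    rw [h0, norm_zero] at h1
    have h2 : (0:ℝ) < Δ * p ^ 2 / 4 := by positivity
    linarith only [h1, h2]
  have hTbound : ∀ σ : ℂ, ‖σ‖ ≤ Δ / 2 → ‖T σ‖ ≤ C₁ * ε ^ 2 / p ^ 2 := by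
    intro σ hσ
    rw [hT, norm_div]
    have hnum : ‖g σ‖ ≤ ε ^ 2 * χ₀ * M ^ 2 := by
      rw [hg, norm_mul, norm_mul, norm_neg, norm_pow, norm_pow, hnε, hnχ]
      have h3 : ‖z₀ + σ‖ ^ 2 ≤ M ^ 2 := pow_le_pow_left₀ (norm_nonneg _) (hA σ hσ) 2
      exact mul_le_mul_of_nonneg_left h3 (by positivity)
    have hdenb := hdenlb σ hσ
    have hdpos : (0:ℝ) < Δ * p ^ 2 / 4 := by positivity
    calc ‖g σ‖ / ‖d σ‖ ≤ (ε ^ 2 * χ₀ * M ^ 2) / (Δ * p ^ 2 / 4) :=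
          div_le_div₀ (by positivity) hnum hdpos hdenb
      _ = C₁ * ε ^ 2 / p ^ 2 := by rw [hC₁def]; field_simp
  have hTball : ∀ σ : ℂ, ‖σ‖ ≤ Δ / 2 → ‖T σ‖ ≤ Δ / 2 := fun σ hσ =>
    le_trans (hTbound σ hσ) hball
  -- Lipschitz estimate
  have hTlip : ∀ σ σ' : ℂ, ‖σ‖ ≤ Δ / 2 → ‖σ'‖ ≤ Δ / 2 →
      ‖T σ - T σ'‖ ≤ (1/2) * ‖σ - σ'‖ := by
    intro σ σ' hσ hσ'
    have hd1 := hdne σ hσ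
    have hd2 := hdne σ' hσ'
    obtain ⟨N, hNdef⟩ : ∃ x : ℂ, x = (p:ℂ) ^ 2 * ((z₀ + σ) ^ 2 * (σ' - σ)
        + ((z₀ + σ) + (z₀ + σ')) * (σ - σ') * (σ - u))
        + (ε:ℂ) ^ 2 * (z₀ + σ) ^ 2 * (z₀ + σ') ^ 2 * (σ' - σ) := ⟨_, rfl⟩
    have hkey : T σ - T σ' = (-(ε:ℂ) ^ 2 * (χ₀:ℂ) * N) / (d σ * d σ') := by
      rw [hT, hT, div_sub_div _ _ hd1 hd2]
      congr 1
      rw [hg, hg, hd, hd, hNdef]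
      ring
    have hNbound : ‖N‖ ≤ p ^ 2 * K₀ * ‖σ - σ'‖ := by
      have ha := hA σ hσ
      have hb := hA σ' hσ'
      have hss : ‖σ' - σ‖ = ‖σ - σ'‖ := norm_sub_rev _ _
      have haM : ‖z₀ + σ‖ ^ 2 ≤ M ^ 2 := pow_le_pow_left₀ (norm_nonneg _) ha 2
      have hbM : ‖z₀ + σ'‖ ^ 2 ≤ M ^ 2 := pow_le_pow_left₀ (norm_nonneg _) hb 2
      have h1 : ‖(z₀ + σ) ^ 2 * (σ' - σ)‖ ≤ M ^ 2 * ‖σ - σ'‖ := by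
        rw [norm_mul, norm_pow, hss]
        exact mul_le_mul_of_nonneg_right haM (norm_nonneg _)
      have hsu : ‖σ - u‖ ≤ 3 * Δ / 2 := by
        calc ‖σ - u‖ ≤ ‖σ‖ + ‖u‖ := norm_sub_le _ _
          _ ≤ Δ / 2 + Δ := by rw [hnu]; linarith
          _ = 3 * Δ / 2 := by ring
      have h2 : ‖((z₀ + σ) + (z₀ + σ')) * (σ - σ') * (σ - u)‖
          ≤ 2 * M * ‖σ - σ'‖ * (3 * Δ / 2) := by
        rw [norm_mul, norm_mul]
        have hab : ‖(z₀ + σ) + (z₀ + σ')‖ ≤ 2 * M := by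
          calc ‖(z₀ + σ) + (z₀ + σ')‖ ≤ ‖z₀ + σ‖ + ‖z₀ + σ'‖ := norm_add_le _ _
            _ ≤ 2 * M := by linarith
        apply mul_le_mul _ hsu (norm_nonneg _) (by positivity)
        exact mul_le_mul hab le_rfl (norm_nonneg _) (by positivity)
      have h3 : ‖(ε:ℂ) ^ 2 * (z₀ + σ) ^ 2 * (z₀ + σ') ^ 2 * (σ' - σ)‖
          ≤ p ^ 2 * M ^ 2 * ‖σ - σ'‖ := by
        rw [norm_mul, norm_mul, norm_mul, norm_pow, norm_pow, norm_pow, hss, hnε]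
        have h4 : ε ^ 2 * ‖z₀ + σ‖ ^ 2 * ‖z₀ + σ'‖ ^ 2 ≤ p ^ 2 * M ^ 2 := by
          have hM2 : (0:ℝ) ≤ M ^ 2 := sq_nonneg M
          calc ε ^ 2 * ‖z₀ + σ‖ ^ 2 * ‖z₀ + σ'‖ ^ 2
              ≤ ε ^ 2 * M ^ 2 * M ^ 2 := by
                have t1 : ε ^ 2 * ‖z₀ + σ‖ ^ 2 ≤ ε ^ 2 * M ^ 2 :=
                  mul_le_mul_of_nonneg_left haM (sq_nonneg ε)
                exact mul_le_mul t1 hbM (sq_nonneg _) (by positivity)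
            _ ≤ (p ^ 2 / 4) * M ^ 2 := mul_le_mul_of_nonneg_right hεM2 hM2
            _ ≤ p ^ 2 * M ^ 2 := by
                have t2 : (0:ℝ) ≤ p ^ 2 * M ^ 2 := by positivity
                linarith only [t2]
        exact mul_le_mul_of_nonneg_right h4 (norm_nonneg _)
      calc ‖N‖ ≤ ‖(p:ℂ) ^ 2 * ((z₀ + σ) ^ 2 * (σ' - σ)
              + ((z₀ + σ) + (z₀ + σ')) * (σ - σ') * (σ - u))‖
            + ‖(ε:ℂ) ^ 2 * (z₀ + σ) ^ 2 * (z₀ + σ') ^ 2 * (σ' - σ)‖ := by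
            rw [hNdef]; exact norm_add_le _ _
        _ ≤ p ^ 2 * (M ^ 2 * ‖σ - σ'‖ + 2 * M * ‖σ - σ'‖ * (3 * Δ / 2))
            + p ^ 2 * M ^ 2 * ‖σ - σ'‖ := by
            have h5 := norm_add_le ((z₀ + σ) ^ 2 * (σ' - σ))
              (((z₀ + σ) + (z₀ + σ')) * (σ - σ') * (σ - u))
            rw [norm_mul, hnp2]
            have h6 : ‖(z₀ + σ) ^ 2 * (σ' - σ)
                + ((z₀ + σ) + (z₀ + σ')) * (σ - σ') * (σ - u)‖
                ≤ M ^ 2 * ‖σ - σ'‖ + 2 * M * ‖σ - σ'‖ * (3 * Δ / 2) := by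
              linarith only [h5, h1, h2]
            have h7 := mul_le_mul_of_nonneg_left h6 (sq_nonneg p)
            linarith only [h7, h3]
        _ = p ^ 2 * K₀ * ‖σ - σ'‖ := by rw [hK₀def]; ring
    rw [hkey, norm_div]
    have hnum2 : ‖-(ε:ℂ) ^ 2 * (χ₀:ℂ) * N‖ ≤ ε ^ 2 * χ₀ * (p ^ 2 * K₀ * ‖σ - σ'‖) := by
      rw [norm_mul, norm_mul, norm_neg, norm_pow, hnε, hnχ]
      exact mul_le_mul_of_nonneg_left hNbound (by positivity)
    have hdd : (Δ * p ^ 2 / 4) * (Δ * p ^ 2 / 4) ≤ ‖d σ * d σ'‖ := by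
      rw [norm_mul]
      exact mul_le_mul (hdenlb σ hσ) (hdenlb σ' hσ') (by positivity) (norm_nonneg _)
    have hddpos : (0:ℝ) < (Δ * p ^ 2 / 4) * (Δ * p ^ 2 / 4) := by positivity
    calc ‖-(ε:ℂ) ^ 2 * (χ₀:ℂ) * N‖ / ‖d σ * d σ'‖
        ≤ (ε ^ 2 * χ₀ * (p ^ 2 * K₀ * ‖σ - σ'‖)) / ((Δ * p ^ 2 / 4) * (Δ * p ^ 2 / 4)) :=
          div_le_div₀ (by positivity) hnum2 hddpos hdd
      _ = (16 * χ₀ * K₀ * ε ^ 2 / (Δ ^ 2 * p ^ 2)) * ‖σ - σ'‖ := by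
          field_simp
          ring
      _ ≤ (1/2) * ‖σ - σ'‖ := mul_le_mul_of_nonneg_right hlipconst (norm_nonneg _)
  -- Banach fixed point on the closed ball
  have hΔ2 : (0:ℝ) ≤ Δ / 2 := by linarith
  have hmem : ∀ x : ℂ, x ∈ Metric.closedBall (0 : ℂ) (Δ / 2) ↔ ‖x‖ ≤ Δ / 2 := by
    intro x
    rw [Metric.mem_closedBall, dist_zero_right]
  haveI : Nonempty (Metric.closedBall (0 : ℂ) (Δ / 2)) :=
    ⟨⟨0, by rw [hmem]; simpa using hΔ2⟩⟩
  haveI : CompleteSpace (Metric.closedBall (0 : ℂ) (Δ / 2)) :=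
    Metric.isClosed_closedBall.completeSpace_coe
  obtain ⟨S, hS⟩ : ∃ S : Metric.closedBall (0 : ℂ) (Δ / 2) → Metric.closedBall (0 : ℂ) (Δ / 2),
      ∀ x, (S x : ℂ) = T x :=
    ⟨fun x => ⟨T x, (hmem _).mpr (hTball x ((hmem x).mp x.2))⟩, fun _ => rfl⟩
  have hcontr : ContractingWith (1/2 : NNReal) S := by
    constructor
    · rw [← NNReal.coe_lt_coe]
      norm_num
    · apply LipschitzWith.of_dist_le_mul
      intro x y
      rw [Subtype.dist_eq (S x) (S y), Subtype.dist_eq x y, dist_eq_norm, dist_eq_norm, hS, hS]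
      have h1 := hTlip x y ((hmem x).mp x.2) ((hmem y).mp y.2)
      calc ‖T x - T y‖ ≤ (1/2) * ‖(x:ℂ) - y‖ := h1
        _ = ((1/2 : NNReal) : ℝ) * ‖(x:ℂ) - y‖ := by norm_num
  obtain ⟨σfix, hfixed⟩ : ∃ x, Function.IsFixedPt S x :=
    ⟨ContractingWith.fixedPoint S hcontr, ContractingWith.fixedPoint_isFixedPt hcontr⟩
  obtain ⟨σp, hσpdef⟩ : ∃ x : ℂ, x = (σfix : ℂ) := ⟨_, rfl⟩
  have hσpball : ‖σp‖ ≤ Δ / 2 := hσpdef ▸ (hmem _).mp σfix.2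
  have hTfix : T σp = σp := by
    rw [hσpdef, ← hS σfix, hfixed]
  -- the bound on σp
  have hσpbound : ‖σp‖ ≤ C₁ * ε ^ 2 / p ^ 2 := by
    rw [← hTfix]
    exact hTbound σp hσpball
  -- the root equation
  have hdnz : d σp ≠ 0 := hdne σp hσpball
  have hrooteq : σp * d σp - g σp = 0 := by
    have h1 : g σp / d σp = σp := by rw [← hT]; exact hTfix
    rw [div_eq_iff hdnz] at h1
    rw [← h1]
    ring
  -- quartic identity and the root
  have hfact : (z₀ + σp) ^ 2 + (Γ:ℂ) * (z₀ + σp) + (ω₀:ℂ) ^ 2 = σp * (σp - u) := by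
    rw [hz₀def]
    linear_combination (1/4 : ℂ) * hu2
  have hQzero : Qf Γ ω₀ χ₀ ε p ((ε : ℂ) * (z₀ + σp)) = 0 := by
    have h1 : Qf Γ ω₀ χ₀ ε p ((ε : ℂ) * (z₀ + σp))
        = (ε:ℂ) ^ 2 * (((z₀ + σp) ^ 2 + (Γ:ℂ) * (z₀ + σp) + (ω₀:ℂ) ^ 2)
            * ((p:ℂ) ^ 2 + (ε:ℂ) ^ 2 * (z₀ + σp) ^ 2)
          + (ε:ℂ) ^ 2 * (χ₀:ℂ) * (z₀ + σp) ^ 2) := by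
      simp only [Qf]
      ring
    rw [h1, hfact]
    have h2 : σp * (σp - u) * ((p:ℂ) ^ 2 + (ε:ℂ) ^ 2 * (z₀ + σp) ^ 2)
        + (ε:ℂ) ^ 2 * (χ₀:ℂ) * (z₀ + σp) ^ 2 = σp * d σp - g σp := by
      rw [hd, hg]
      ring
    rw [h2, hrooteq, mul_zero]
  -- conjugation
  have hQconj : ∀ s : ℂ, Qf Γ ω₀ χ₀ ε p ((starRingEnd ℂ) s)
      = (starRingEnd ℂ) (Qf Γ ω₀ χ₀ ε p s) := by
    intro s
    simp only [Qf, map_add, map_mul, map_pow, Complex.conj_ofReal]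
  obtain ⟨σm, hσmdef⟩ : ∃ x : ℂ, x = (starRingEnd ℂ) σp := ⟨_, rfl⟩
  have hplusexpr : -((ε / 2 : ℝ) : ℂ) * ((Γ : ℂ) + Complex.I * ((Δ : ℝ) : ℂ))
      + (ε : ℂ) * σp = (ε : ℂ) * (z₀ + σp) := by
    rw [hz₀def, hudef]
    push_cast
    ring
  have hminusexpr : -((ε / 2 : ℝ) : ℂ) * ((Γ : ℂ) - Complex.I * ((Δ : ℝ) : ℂ))
      + (ε : ℂ) * σm
      = (starRingEnd ℂ) (-((ε / 2 : ℝ) : ℂ) * ((Γ : ℂ) + Complex.I * ((Δ : ℝ) : ℂ))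
        + (ε : ℂ) * σp) := by
    rw [hσmdef]
    simp only [map_add, map_mul, map_neg, Complex.conj_ofReal, Complex.conj_I]
    ring
  refine ⟨σp, σm, ?_, ?_, ?_, ?_, hminusexpr⟩
  · rw [hplusexpr, hQzero]
  · rw [hminusexpr, hQconj, hplusexpr, hQzero, map_zero]
  · exact hσpbound
  · rw [hσmdef, RCLike.norm_conj]
    exact hσpbound
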